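/- Let g : ℝ → ℝ be convex with bounded nonempty sublevel sets, let λ, μ ∈ [0,∞), and let b⁻, b⁺ ∈ ℝ with b⁻ ≤ b⁺ satisfy −λ ∈ ∂g(b⁻) and μ ∈ ∂g(b⁺). For y ∈ ℝ define z_y(x) = g(x) + λ(x−y)₊ + μ(y−x)₊. Then for every y ∈ ℝ, the point x*(y) = min(b⁺, max(b⁻, y)) is a global minimizer of z_y over ℝ. -/
import Mathlib


open Filter Topology Set

def subdiff (g : ℝ → ℝ) (x : ℝ) : Set ℝ :=
  {d : ℝ | ∀ z : ℝ, g x + d * (z - x) ≤ g z}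

lemma claimA (g : ℝ → ℝ) (hg : ConvexOn ℝ Set.univ g) (lam : ℝ)
    (bm : ℝ) (hbm : ∀ z : ℝ, g bm + (-lam) * (z - bm) ≤ g z) :
    ∀ u x : ℝ, bm ≤ u → u ≤ x → g u ≤ g x + lam * (x - u) := by
  intro u x hbu hux
  rcases eq_or_lt_of_le hux with rfl | hux
  · simp
  rcases eq_or_lt_of_le hbu with rfl | hbu
  · have := hbm x; linarith [this]
  · have h1 := hg.slope_mono_adjacent (Set.mem_univ bm) (Set.mem_univ x) hbu hux
    have h2 : -lam ≤ (g u - g bm) / (u - bm) := by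
      rw [le_div_iff₀ (by linarith)]
      have := hbm u; nlinarith
    have h3 : -lam ≤ (g x - g u) / (x - u) := le_trans h2 h1
    rw [le_div_iff₀ (by linarith)] at h3
    nlinarith

lemma claimB (g : ℝ → ℝ) (hg : ConvexOn ℝ Set.univ g) (mu : ℝ)
    (bp : ℝ) (hbp : ∀ z : ℝ, g bp + mu * (z - bp) ≤ g z) :
    ∀ u x : ℝ, u ≤ bp → x ≤ u → g u ≤ g x + mu * (u - x) := by
  intro u x hub hxu
  rcases eq_or_lt_of_le hxu with rfl | hxu
  · simp
  rcases eq_or_lt_of_le hub with rfl | hub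
  · have := hbp x; linarith [this]
  · have h1 := hg.slope_mono_adjacent (Set.mem_univ x) (Set.mem_univ bp) hxu hub
    have h2 : (g bp - g u) / (bp - u) ≤ mu := by
      rw [div_le_iff₀ (by linarith)]
      have := hbp u; nlinarith
    have h3 : (g u - g x) / (u - x) ≤ mu := le_trans h1 h2
    rw [div_le_iff₀ (by linarith)] at h3
    nlinarith

theorem stmt_11 (g : ℝ → ℝ) (hg : ConvexOn ℝ Set.univ g)
    (hlev : ∃ α : ℝ, {x : ℝ | g x ≤ α}.Nonempty ∧ Bornology.IsBounded {x : ℝ | g x ≤ α})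
    (lam mu : ℝ) (hlam : 0 ≤ lam) (hmu : 0 ≤ mu)
    (bm bp : ℝ) (hb : bm ≤ bp) (hbm : -lam ∈ subdiff g bm) (hbp : mu ∈ subdiff g bp) :
    ∀ y x : ℝ,
      g (min bp (max bm y)) + lam * max (min bp (max bm y) - y) 0
          + mu * max (y - min bp (max bm y)) 0
        ≤ g x + lam * max (x - y) 0 + mu * max (y - x) 0 := by
  intro y x
  have hA := claimA g hg lam bm hbm
  have hB := claimB g hg mu bp hbp
  have hxy1 : lam * (x - y) ≤ lam * max (x - y) 0 :=
    mul_le_mul_of_nonneg_left (le_max_left _ _) hlam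
  have hxy2 : mu * (y - x) ≤ mu * max (y - x) 0 :=
    mul_le_mul_of_nonneg_left (le_max_left _ _) hmu
  have hxy1' : 0 ≤ lam * max (x - y) 0 :=
    mul_nonneg hlam (le_max_right _ _)
  have hxy2' : 0 ≤ mu * max (y - x) 0 :=
    mul_nonneg hmu (le_max_right _ _)
  rcases le_total y bm with hy | hy
  · -- clip = bm
    have hc : min bp (max bm y) = bm := by
      rw [max_eq_left hy, min_eq_right hb]
    rw [hc]
    have h1 : g bm + (-lam) * (x - bm) ≤ g x := hbm x
    have hm1 : max (bm - y) 0 = bm - y := max_eq_left (by linarith)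
    have hm2 : max (y - bm) 0 = 0 := max_eq_right (by linarith)
    rw [hm1, hm2]
    nlinarith
  rcases le_total bp y with hy2 | hy2
  · -- clip = bp
    have hc : min bp (max bm y) = bp := by
      rw [max_eq_right (le_trans hb hy2), min_eq_left hy2]
    rw [hc]
    have h1 : g bp + mu * (x - bp) ≤ g x := hbp x
    have hm1 : max (bp - y) 0 = 0 := max_eq_right (by linarith)
    have hm2 : max (y - bp) 0 = y - bp := max_eq_left (by linarith)
    rw [hm1, hm2]
    nlinarith
  · -- clip = y
    have hc : min bp (max bm y) = y := by
      rw [max_eq_right hy, min_eq_right hy2]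
    rw [hc]
    simp only [sub_self, max_self, mul_zero, add_zero]
    rcases le_total y x with hxy | hxy
    · have := hA y x hy hxy
      nlinarith
    · have := hB y x hy2 hxy
      nlinarith
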